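/- Let 0 ≤ m ≤ k ≤ n, let T ⊆ {1,…,n} with #T = m, and let e : {(i,j) : 1 ≤ i ≤ j ≤ n} → ℕ be finitely supported. Call e T-nonstandard if there exists an O_k-split with {a_1,…,a_s, d_1,…,d_t} = T and e(b_i,c_i) ≥ 1 for every i = 1,…,r; otherwise call e T-standard. Then e is T-standard if and only if supp(e) ⊆ 𝐅 for some family 𝐅 with 𝐅 ⇉ T. (Lemma 7.14 of the paper.) -/

import Mathlib

attribute [local instance] Classical.propDecidable

/-!
STATEMENT 18: (Lemma 7.14.)  Let 0 ≤ m ≤ k ≤ n, T ⊆ {1,…,n} with #T = m, and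
e : {(i,j) : 1 ≤ i ≤ j ≤ n} → ℕ finitely supported.  Call e T-nonstandard if there is an
O_k-split (a_1<…<a_s<d_1<…<d_t, b_1<…<b_r<d_1, c_1<…<c_r, b_i ≤ c_i, r ≥ s, s+t = m,
r+t = k+1) with {a_1,…,a_s,d_1,…,d_t} = T and e(b_i,c_i) ≥ 1 for all i.  Then e is T-standard
iff supp(e) ⊆ 𝐅 for some family 𝐅 ⇉ T.
-/

noncomputable section

/-- A unit lattice step to the north or to the east. -/
def StepO (a b : ℕ × ℕ) : Prop := (a.1 = b.1 + 1 ∧ a.2 = b.2) ∨ b = (a.1, a.2 + 1)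

/-- A family of `k` pairwise disjoint north/east lattice paths in the staircase
`𝒫 = {(i,j) : 1 ≤ i ≤ j ≤ n}`, each starting at a diagonal point and ending on the right
edge. -/
structure OFamily (n k : ℕ) where
  path : Fin k → List (ℕ × ℕ)
  ne : ∀ ℓ, path ℓ ≠ []
  chain : ∀ ℓ, (path ℓ).Chain' StepO
  first : ∀ ℓ, ∃ st, (path ℓ).head? = some st ∧ st.1 = st.2
  mem_P : ∀ ℓ, ∀ x ∈ path ℓ, 1 ≤ x.1 ∧ x.1 ≤ x.2 ∧ x.2 ≤ n
  ends : ∀ ℓ, ((path ℓ).getLast?).map Prod.snd = some n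
  disj : ∀ ℓ ℓ', ℓ ≠ ℓ' → ∀ x ∈ path ℓ, x ∉ path ℓ'

def OFamily.pointSet {n k : ℕ} (F : OFamily n k) : Finset (ℕ × ℕ) :=
  Finset.univ.biUnion fun ℓ => (F.path ℓ).toFinset

def OFamily.lastRow {n k : ℕ} (F : OFamily n k) (ℓ : Fin k) : ℕ :=
  (((F.path ℓ).getLast?).map Prod.fst).getD 0

def OFamily.endpointSet {n k : ℕ} (F : OFamily n k) : Finset ℕ :=
  Finset.univ.image F.lastRow

/-- Lexicographic comparison of finite sets of naturals via their sorted enumerations. -/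
def lexLE (A B : Finset ℕ) : Prop :=
  A = B ∨ List.Lex (· < ·) (A.sort (· ≤ ·)) (B.sort (· ≤ ·))

/-- `E ⇉ T`: `E` is the lexicographically least `k`-element subset of `{1,…,n}`
containing `T`. -/
def EtoTO (n k : ℕ) (E T : Finset ℕ) : Prop :=
  T ⊆ E ∧ E ⊆ Finset.Icc 1 n ∧ E.card = k ∧
    ∀ E', T ⊆ E' → E' ⊆ Finset.Icc 1 n → E'.card = k → lexLE E E'

/-- `e` is `T`-nonstandard: the monomial `(∏ f_{ij}^{e(i,j)})·φ_T` is divisible by the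
monomial `∏ f_{b_i,c_i}·φ_{{a,d}}` of an `O_k`-split with `{a_1,…,a_s,d_1,…,d_t} = T`. -/
def TNonstandardO (n k m : ℕ) (T : Finset ℕ) (e : (ℕ × ℕ) →₀ ℕ) : Prop :=
  ∃ (r s t : ℕ) (a : Fin s → ℕ) (d : Fin t → ℕ) (b c : Fin r → ℕ),
    StrictMono a ∧ StrictMono d ∧ StrictMono b ∧ StrictMono c ∧
    (∀ i, 1 ≤ a i ∧ a i ≤ n) ∧ (∀ i, 1 ≤ d i ∧ d i ≤ n) ∧
    (∀ i, 1 ≤ b i ∧ b i ≤ n) ∧ (∀ i, 1 ≤ c i ∧ c i ≤ n) ∧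
    (∀ i j, a i < d j) ∧ (∀ i j, b i < d j) ∧ (∀ i, b i ≤ c i) ∧
    s ≤ r ∧ s + t = m ∧ r + t = k + 1 ∧
    (Finset.univ.image a ∪ Finset.univ.image d = T) ∧
    (∀ i, 1 ≤ e (b i, c i))

/-! ### Generic helpers -/

/-- The "same path" preorder: `q` is weakly north-east of `p` along a path. -/
def PathLE (p q : ℕ × ℕ) : Prop := q.1 ≤ p.1 ∧ p.2 ≤ q.2

lemma stepO_pathLE {a b : ℕ × ℕ} (h : StepO a b) : PathLE a b := by
  rcases h with ⟨h1, h2⟩ | h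
  · exact ⟨by omega, by omega⟩
  · subst h; exact ⟨le_refl _, by omega⟩

lemma pathLE_trans : Transitive PathLE := by
  intro a b c ⟨h1, h2⟩ ⟨h3, h4⟩; exact ⟨le_trans h3 h1, le_trans h2 h4⟩

instance : IsTrans (ℕ × ℕ) PathLE := ⟨fun a b c h1 h2 => pathLE_trans h1 h2⟩

lemma pathLE_refl (p : ℕ × ℕ) : PathLE p p := ⟨le_refl _, le_refl _⟩

/-- Any two points on a path are `PathLE`-comparable. -/
lemma path_comparable {l : List (ℕ × ℕ)} (hl : l.Chain' StepO) {p q : ℕ × ℕ}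
    (hp : p ∈ l) (hq : q ∈ l) : PathLE p q ∨ PathLE q p := by
  have hpw : l.Pairwise PathLE := by
    have : l.Chain' PathLE := List.IsChain.imp (fun a b h => stepO_pathLE h) hl
    exact List.isChain_iff_pairwise.mp this
  rw [List.pairwise_iff_get] at hpw
  obtain ⟨i, hi⟩ := List.get_of_mem hp
  obtain ⟨j, hj⟩ := List.get_of_mem hq
  rcases lt_trichotomy i j with h | h | h
  · left; rw [← hi, ← hj]; exact hpw i j h
  · left; rw [← hi, ← hj, h]; exact pathLE_refl _
  · right; rw [← hi, ← hj]; exact hpw j i h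

/-- Every point on a path is `PathLE` the last point. -/
lemma pathLE_getLast {l : List (ℕ × ℕ)} (hl : l.Chain' StepO) {p : ℕ × ℕ}
    (hp : p ∈ l) (hne : l ≠ []) : PathLE p (l.getLast hne) := by
  have hpw : l.Pairwise PathLE := by
    have : l.Chain' PathLE := List.IsChain.imp (fun a b h => stepO_pathLE h) hl
    exact List.isChain_iff_pairwise.mp this
  have hsplit := List.dropLast_append_getLast hne
  rcases (by rw [← hsplit] at hp; exact List.mem_append.mp hp) with h | h
  · have := (List.pairwise_append.mp (by rw [hsplit]; exact hpw)).2.2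
    exact this p h _ (List.mem_singleton_self _)
  · rw [List.mem_singleton.mp h]; exact pathLE_refl _

/-- The last row of a path bounds rows of its points from below. -/
lemma lastRow_le {n k : ℕ} (F : OFamily n k) (ℓ : Fin k) {p : ℕ × ℕ}
    (hp : p ∈ F.path ℓ) : F.lastRow ℓ ≤ p.1 := by
  have hne := F.ne ℓ
  have h := pathLE_getLast (F.chain ℓ) hp hne
  have : F.lastRow ℓ = ((F.path ℓ).getLast hne).1 := by
    unfold OFamily.lastRow
    rw [List.getLast?_eq_getLast hne]
    rfl
  rw [this]; exact h.1

/-- Two points strictly increasing in both coordinates cannot be on the same path. -/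
lemma not_same_path {l : List (ℕ × ℕ)} (hl : l.Chain' StepO) {p q : ℕ × ℕ}
    (hp : p ∈ l) (hq : q ∈ l) (h1 : p.1 < q.1) (h2 : p.2 < q.2) : False := by
  rcases path_comparable hl hp hq with ⟨ha, _⟩ | ⟨_, hb⟩
  · omega
  · omega

/-- The easy direction: a family `⇉ T` covering the support precludes nonstandardness. -/
theorem no_split_of_family (n k m : ℕ) (T : Finset ℕ) (e : (ℕ × ℕ) →₀ ℕ)
    (F : OFamily n k) (hE : EtoTO n k F.endpointSet T)
    (hcov : ∀ x ∈ e.support, x ∈ F.pointSet) : ¬ TNonstandardO n k m T e := by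
  rintro ⟨r, s, t, a, d, b, c, hma, hmd, hmb, hmc, hba, hrd, hrb, hrc, had, hbd, hbc,
    hsr, hst, hrt, himg, hsupp⟩
  classical
  -- each (b i, c i) lies on some path
  have hmem : ∀ i : Fin r, (b i, c i) ∈ e.support := by
    intro i; rw [Finsupp.mem_support_iff]; have := hsupp i; omega
  have hpath : ∀ i : Fin r, ∃ ℓ : Fin k, (b i, c i) ∈ F.path ℓ := by
    intro i
    have := hcov _ (hmem i)
    simp only [OFamily.pointSet, Finset.mem_biUnion, Finset.mem_univ, true_and,
      List.mem_toFinset] at this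
    exact this
  choose ℓ hℓ using hpath
  -- lastRow is injective
  have hcard : F.endpointSet.card = k := hE.2.2.1
  have hinj : Function.Injective F.lastRow := by
    have h1 : (Finset.univ.image F.lastRow).card = (Finset.univ : Finset (Fin k)).card := by
      have : (Finset.univ.image F.lastRow).card = k := hcard
      rw [this, Finset.card_univ, Fintype.card_fin]
    have := Finset.card_image_iff.mp h1
    intro x y hxy
    exact this (Finset.mem_coe.mpr (Finset.mem_univ x)) (Finset.mem_coe.mpr (Finset.mem_univ y)) hxy
  -- ℓ is injective
  have hℓinj : Function.Injective ℓ := by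
    intro i j hij
    by_contra hne
    rcases lt_or_gt_of_ne hne with h | h
    · exact not_same_path (F.chain (ℓ i)) (hℓ i) (by rw [hij]; exact hℓ j) (hmb h) (hmc h)
    · exact not_same_path (F.chain (ℓ j)) (hℓ j) (by rw [← hij]; exact hℓ i) (hmb h) (hmc h)
  -- each d j is the lastRow of some path
  have hd : ∀ j : Fin t, ∃ ℓ' : Fin k, F.lastRow ℓ' = d j := by
    intro j
    have hdT : d j ∈ T := by
      rw [← himg]; apply Finset.mem_union_right
      exact Finset.mem_image.mpr ⟨j, Finset.mem_univ _, rfl⟩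
    have := hE.1 hdT
    simp only [OFamily.endpointSet, Finset.mem_image, Finset.mem_univ, true_and] at this
    exact this
  choose ℓ' hℓ' using hd
  have hℓ'inj : Function.Injective ℓ' := by
    intro i j hij
    have : d i = d j := by rw [← hℓ' i, ← hℓ' j, hij]
    exact hmd.injective this
  -- the combined map is injective
  have hcomb : Function.Injective (Sum.elim ℓ ℓ' : Fin r ⊕ Fin t → Fin k) := by
    intro x y hxy
    match x, y with
    | Sum.inl i, Sum.inl j => exact congrArg Sum.inl (hℓinj hxy)
    | Sum.inr i, Sum.inr j => exact congrArg Sum.inr (hℓ'inj hxy)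
    | Sum.inl i, Sum.inr j =>
      exfalso
      have h1 : F.lastRow (ℓ i) ≤ b i := lastRow_le F (ℓ i) (hℓ i)
      have h2 : F.lastRow (ℓ' j) = d j := hℓ' j
      have := hbd i j
      simp only [Sum.elim_inl, Sum.elim_inr] at hxy
      rw [hxy] at h1; omega
    | Sum.inr i, Sum.inl j =>
      exfalso
      have h1 : F.lastRow (ℓ j) ≤ b j := lastRow_le F (ℓ j) (hℓ j)
      have h2 : F.lastRow (ℓ' i) = d i := hℓ' i
      have := hbd j i
      simp only [Sum.elim_inl, Sum.elim_inr] at hxy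
      rw [← hxy] at h1; omega
  have := Fintype.card_le_of_injective _ hcomb
  simp only [Fintype.card_sum, Fintype.card_fin] at this
  omega


/-! ### Counting and lexicographic minimality -/

lemma countP_sort (s : Finset ℕ) (p : ℕ → Prop) [DecidablePred p] :
    (s.sort (· ≤ ·)).countP (fun y => decide (p y)) = (s.filter p).card := by
  classical
  have h1 := Finset.sort_perm_toList s (· ≤ ·)
  rw [h1.countP_eq]
  have h2 : (s.filter p).card = Multiset.countP p s.val := by
    rw [Multiset.countP_eq_card_filter]; rfl
  have h3 : Multiset.countP p s.val = (s.toList).countP (fun y => decide (p y)) := by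
    conv_lhs => rw [← Finset.coe_toList s]
    rw [Multiset.coe_countP]
  rw [h3] at h2
  exact h2.symm

lemma lex_of_counts : ∀ (u v : List ℕ), List.Pairwise (· < ·) u → List.Pairwise (· < ·) v →
    u.length = v.length →
    (∀ x, v.countP (fun y => decide (y ≤ x)) ≤ u.countP (fun y => decide (y ≤ x))) →
    u = v ∨ List.Lex (· < ·) u v := by
  intro u
  induction u with
  | nil =>
    intro v _ _ hlen _
    have : v = [] := List.eq_nil_of_length_eq_zero (by simpa using hlen.symm)
    subst this; left; rfl
  | cons a as ih =>
    intro v hu hv hlen hcnt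
    match v with
    | [] => simp at hlen
    | b :: bs =>
      have hab : a ≤ b := by
        by_contra hab
        push_neg at hab
        have h1 := hcnt b
        have h2 : (a :: as).countP (fun y => decide (y ≤ b)) = 0 := by
          rw [List.countP_eq_zero]
          intro z hz
          have : a ≤ z := by
            rcases List.mem_cons.mp hz with h | h
            · omega
            · exact le_of_lt (List.rel_of_pairwise_cons hu h)
          simp only [decide_eq_true_eq]; omega
        rw [h2] at h1
        have h3 : 0 < (b :: bs).countP (fun y => decide (y ≤ b)) := by
          rw [List.countP_cons]
          simp
        omega
      rcases lt_or_eq_of_le hab with h | h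
      · right; exact List.Lex.rel h
      · subst h
        have htail := ih bs hu.of_cons hv.of_cons (by simpa using hlen) ?_
        · rcases htail with h | h
          · left; rw [h]
          · right; exact List.Lex.cons h
        · intro x
          have h1 := hcnt x
          rw [List.countP_cons, List.countP_cons] at h1
          by_cases hax : a ≤ x
          · simp only [decide_eq_true_eq, hax, if_true] at h1; omega
          · have h2 : as.countP (fun y => decide (y ≤ x)) = 0 := by
              rw [List.countP_eq_zero]
              intro z hz
              have := List.rel_of_pairwise_cons hu hz
              simp only [decide_eq_true_eq]; omega
            have h3 : bs.countP (fun y => decide (y ≤ x)) = 0 := by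
              rw [List.countP_eq_zero]
              intro z hz
              have := List.rel_of_pairwise_cons hv hz
              simp only [decide_eq_true_eq]; omega
            omega

lemma lexLE_of_card {A B : Finset ℕ} (hcard : A.card = B.card)
    (h : ∀ x, (B.filter (· ≤ x)).card ≤ (A.filter (· ≤ x)).card) : lexLE A B := by
  classical
  have := lex_of_counts (A.sort (· ≤ ·)) (B.sort (· ≤ ·)) (Finset.sortedLT_sort A).pairwise
    (Finset.sortedLT_sort B).pairwise
    (by rw [Finset.length_sort, Finset.length_sort, hcard])
    (by intro x; rw [countP_sort A (· ≤ x), countP_sort B (· ≤ x)]; exact h x)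
  rcases this with h' | h'
  · left
    have : (A.sort (· ≤ ·)).toFinset = (B.sort (· ≤ ·)).toFinset := by rw [h']
    rwa [Finset.sort_toFinset, Finset.sort_toFinset] at this
  · right; exact h'

/-! ### The canonical endpoint set -/

def fillerList (n k m : ℕ) (T : Finset ℕ) : List ℕ :=
  ((Finset.Icc 1 n \ T).sort (· ≤ ·)).take (k - m)

def Efin (n k m : ℕ) (T : Finset ℕ) : Finset ℕ :=
  T ∪ (fillerList n k m T).toFinset

section Econstruction

variable {n k m : ℕ} {T : Finset ℕ}
variable (hm : m ≤ k) (hkn : k ≤ n) (hT : T ⊆ Finset.Icc 1 n) (hTcard : T.card = m)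

lemma filler_sublist : (fillerList n k m T).Sublist ((Finset.Icc 1 n \ T).sort (· ≤ ·)) :=
  List.take_sublist _ _

lemma filler_nodup : (fillerList n k m T).Nodup :=
  (filler_sublist).nodup (Finset.sort_nodup _ _)

lemma filler_subset : (fillerList n k m T).toFinset ⊆ Finset.Icc 1 n \ T := by
  intro y hy
  rw [List.mem_toFinset] at hy
  have := (filler_sublist).mem hy
  rwa [Finset.mem_sort] at this

include hm hkn hT hTcard in
lemma filler_length : (fillerList n k m T).length = k - m := by
  unfold fillerList
  rw [List.length_take, Finset.length_sort, Finset.card_sdiff_of_subset hT, Nat.card_Icc, hTcard]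
  omega

include hm hkn hT hTcard in
lemma filler_card : (fillerList n k m T).toFinset.card = k - m := by
  rw [List.toFinset_card_of_nodup filler_nodup, filler_length hm hkn hT hTcard]

lemma filler_disjoint : Disjoint T (fillerList n k m T).toFinset := by
  rw [Finset.disjoint_right]
  intro y hy hyT
  have := filler_subset hy
  rw [Finset.mem_sdiff] at this
  exact this.2 hyT

include hm hkn hT hTcard in
lemma Efin_card : (Efin n k m T).card = k := by
  unfold Efin
  rw [Finset.card_union_of_disjoint filler_disjoint, hTcard, filler_card hm hkn hT hTcard]
  omega

include hT in
lemma Efin_subset : Efin n k m T ⊆ Finset.Icc 1 n := by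
  unfold Efin
  apply Finset.union_subset hT
  intro y hy
  exact (Finset.mem_sdiff.mp (filler_subset hy)).1

/-- Any element of `Icc 1 n` missing from `Efin` is larger than every filler. -/
lemma filler_lt {y : ℕ} (hy : y ∈ Finset.Icc 1 n) (hyE : y ∉ Efin n k m T) :
    ∀ f ∈ (fillerList n k m T).toFinset, f < y := by
  intro f hf
  rw [List.mem_toFinset] at hf
  have hyT : y ∉ T := fun h => hyE (Finset.mem_union_left _ h)
  have hyF : y ∉ fillerList n k m T := fun h =>
    hyE (Finset.mem_union_right _ (List.mem_toFinset.mpr h))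
  have hymem : y ∈ (Finset.Icc 1 n \ T).sort (· ≤ ·) := by
    rw [Finset.mem_sort, Finset.mem_sdiff]; exact ⟨hy, hyT⟩
  have hsplit := List.take_append_drop (k - m) ((Finset.Icc 1 n \ T).sort (· ≤ ·))
  have hydrop : y ∈ ((Finset.Icc 1 n \ T).sort (· ≤ ·)).drop (k - m) := by
    rcases List.mem_append.mp (by rw [hsplit]; exact hymem) with h | h
    · exact absurd h hyF
    · exact h
  have hpw : (((Finset.Icc 1 n \ T).sort (· ≤ ·)).take (k - m) ++
      ((Finset.Icc 1 n \ T).sort (· ≤ ·)).drop (k - m)).Pairwise (· < ·) := by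
    rw [hsplit]; exact (Finset.sortedLT_sort _).pairwise
  exact (List.pairwise_append.mp hpw).2.2 f hf y hydrop

include hm hkn hT hTcard in
lemma Efin_lex_min {E' : Finset ℕ} (hTE' : T ⊆ E') (hE'sub : E' ⊆ Finset.Icc 1 n)
    (hE'card : E'.card = k) : lexLE (Efin n k m T) E' := by
  classical
  apply lexLE_of_card (by rw [Efin_card hm hkn hT hTcard, hE'card])
  intro x
  set F := (fillerList n k m T).toFinset with hF
  have hsplitE : (Efin n k m T).filter (· ≤ x) = T.filter (· ≤ x) ∪ F.filter (· ≤ x) := by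
    unfold Efin; rw [Finset.filter_union]
  have hdisjf : Disjoint (T.filter (· ≤ x)) (F.filter (· ≤ x)) :=
    Finset.disjoint_filter_filter filler_disjoint
  have hcardE : ((Efin n k m T).filter (· ≤ x)).card
      = (T.filter (· ≤ x)).card + (F.filter (· ≤ x)).card := by
    rw [hsplitE, Finset.card_union_of_disjoint hdisjf]
  -- decompose E'
  have hsplitE' : E'.filter (· ≤ x) = T.filter (· ≤ x) ∪ (E' \ T).filter (· ≤ x) := by
    rw [← Finset.filter_union, Finset.union_sdiff_of_subset hTE']
  have hcardE' : (E'.filter (· ≤ x)).card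
      ≤ (T.filter (· ≤ x)).card + ((E' \ T).filter (· ≤ x)).card := by
    rw [hsplitE']; exact Finset.card_union_le _ _
  have hkey : ((E' \ T).filter (· ≤ x)).card ≤ (F.filter (· ≤ x)).card := by
    by_cases hall : ∀ f ∈ F, f ≤ x
    · have h1 : F.filter (· ≤ x) = F := Finset.filter_true_of_mem hall
      have h2 : ((E' \ T).filter (· ≤ x)).card ≤ (E' \ T).card :=
        Finset.card_le_card (Finset.filter_subset _ _)
      have h3 : (E' \ T).card = k - m := by
        rw [Finset.card_sdiff_of_subset hTE', hE'card, hTcard]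
      rw [h1, hF, filler_card hm hkn hT hTcard]
      omega
    · push_neg at hall
      obtain ⟨f0, hf0, hf0x⟩ := hall
      apply Finset.card_le_card
      intro y hy
      rw [Finset.mem_filter, Finset.mem_sdiff] at hy
      obtain ⟨⟨hyE', hyT⟩, hyx⟩ := hy
      rw [Finset.mem_filter]
      refine ⟨?_, hyx⟩
      by_contra hyF
      have hyIcc : y ∈ Finset.Icc 1 n := hE'sub hyE'
      have hyEfin : y ∉ Efin n k m T := by
        unfold Efin
        rw [Finset.mem_union]
        push_neg
        exact ⟨hyT, hyF⟩
      have := filler_lt hyIcc hyEfin f0 hf0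
      omega
  omega

include hm hkn hT hTcard in
lemma Efin_EtoTO : EtoTO n k (Efin n k m T) T := by
  refine ⟨Finset.subset_union_left, Efin_subset hT, Efin_card hm hkn hT hTcard, ?_⟩
  intro E' hTE' hE'sub hE'card
  exact Efin_lex_min hm hkn hT hTcard hTE' hE'sub hE'card

end Econstruction

/-- image of `orderEmbOfFin` over `univ` recovers the set. -/
lemma image_orderEmbOfFin {s : Finset ℕ} {r : ℕ} (h : s.card = r) :
    Finset.univ.image (s.orderEmbOfFin h) = s := by
  ext z
  simp only [Finset.mem_image, Finset.mem_univ, true_and]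
  constructor
  · rintro ⟨i, rfl⟩; exact Finset.orderEmbOfFin_mem s h i
  · intro hz
    have : z ∈ Set.range (s.orderEmbOfFin h) := by
      rw [Finset.range_orderEmbOfFin]; exact hz
    exact this

/-! ### The threshold bound from standardness -/

theorem thresh_of_not_nonstandard (n k m : ℕ) (hm : m ≤ k) (hkn : k ≤ n)
    (T : Finset ℕ) (hT : T ⊆ Finset.Icc 1 n) (hTcard : T.card = m)
    (e : (ℕ × ℕ) →₀ ℕ) (he : ∀ x ∈ e.support, 1 ≤ x.1 ∧ x.1 ≤ x.2 ∧ x.2 ≤ n)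
    (hstd : ¬ TNonstandardO n k m T e) :
    ∀ (r x : ℕ) (q : Fin r → ℕ × ℕ), StrictMono (fun i => (q i).1) →
      StrictMono (fun i => (q i).2) → (∀ i, q i ∈ e.support) → (∀ i, (q i).1 < x) →
      r ≤ ((Efin n k m T).filter (· < x)).card := by
  classical
  intro r x q hq1 hq2 hqS hqx
  by_cases hA : ∀ y, y ∈ Finset.Icc 1 n → y < x → y ∈ Efin n k m T
  · -- all small values are endpoints: the rows of the chain inject into the filter
    have : (Finset.univ : Finset (Fin r)).card ≤ ((Efin n k m T).filter (· < x)).card := by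
      apply Finset.card_le_card_of_injOn (fun i => (q i).1)
      · intro i _
        rw [Finset.mem_coe, Finset.mem_filter]
        refine ⟨hA _ ?_ (hqx i), hqx i⟩
        have := he _ (hqS i)
        rw [Finset.mem_Icc]
        dsimp only
        omega
      · intro i _ j _ hij
        exact hq1.injective hij
    simpa using this
  · push_neg at hA
    obtain ⟨y, hyIcc, hyx, hyE⟩ := hA
    by_contra hlt
    push_neg at hlt
    -- the fillers are all < y < x
    set F := (fillerList n k m T).toFinset with hFdef
    have hFlt : ∀ f ∈ F, f < x := by
      intro f hf
      have := filler_lt hyIcc hyE f hf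
      omega
    set s := (T.filter (· < x)).card with hsdef
    set t := (T.filter (fun z => ¬ z < x)).card with htdef
    have hst : s + t = m := by
      rw [hsdef, htdef, Finset.card_filter_add_card_filter_not, hTcard]
    have htm : t ≤ m := by omega
    -- lower bound on the filter card
    have hsub : T.filter (· < x) ∪ F ⊆ (Efin n k m T).filter (· < x) := by
      intro z hz
      rw [Finset.mem_union] at hz
      rw [Finset.mem_filter]
      rcases hz with hz | hz
      · rw [Finset.mem_filter] at hz
        exact ⟨Finset.mem_union_left _ hz.1, hz.2⟩
      · exact ⟨Finset.mem_union_right _ hz, hFlt _ hz⟩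
    have hdisj2 : Disjoint (T.filter (· < x)) F :=
      Finset.disjoint_of_subset_left (Finset.filter_subset _ _) (filler_disjoint)
    have hge : s + (k - m) ≤ ((Efin n k m T).filter (· < x)).card := by
      calc s + (k - m) = (T.filter (· < x) ∪ F).card := by
            rw [Finset.card_union_of_disjoint hdisj2, hFdef,
              filler_card hm hkn hT hTcard]
          _ ≤ _ := Finset.card_le_card hsub
    -- so the chain has length at least r' = k+1-t
    have hr' : k + 1 - t ≤ r := by omega
    apply hstd
    refine ⟨k + 1 - t, s, t, (T.filter (· < x)).orderEmbOfFin rfl,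
      (T.filter (fun z => ¬ z < x)).orderEmbOfFin rfl,
      (fun i => (q (Fin.castLE hr' i)).1), (fun i => (q (Fin.castLE hr' i)).2),
      ?_, ?_, ?_, ?_, ?_, ?_, ?_, ?_, ?_, ?_, ?_, ?_, ?_, ?_, ?_, ?_⟩
    · exact (Finset.orderEmbOfFin _ _).strictMono
    · exact (Finset.orderEmbOfFin _ _).strictMono
    · exact fun i j hij => hq1 (by exact Fin.mk_lt_mk.mpr hij)
    · exact fun i j hij => hq2 (by exact Fin.mk_lt_mk.mpr hij)
    · intro i
      have := hT (Finset.mem_filter.mp (Finset.orderEmbOfFin_mem _ rfl i)).1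
      rw [Finset.mem_Icc] at this; exact this
    · intro i
      have := hT (Finset.mem_filter.mp (Finset.orderEmbOfFin_mem _ rfl i)).1
      rw [Finset.mem_Icc] at this; exact this
    · intro i
      have := he _ (hqS (Fin.castLE hr' i)); dsimp only; omega
    · intro i
      have := he _ (hqS (Fin.castLE hr' i)); dsimp only; omega
    · intro i j
      have h1 := (Finset.mem_filter.mp (Finset.orderEmbOfFin_mem _ rfl i)).2
      have h2 := (Finset.mem_filter.mp (Finset.orderEmbOfFin_mem
        (s := T.filter (fun z => ¬ z < x)) rfl j)).2
      omega
    · intro i j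
      have h1 := hqx (Fin.castLE hr' i)
      have h2 := (Finset.mem_filter.mp (Finset.orderEmbOfFin_mem
        (s := T.filter (fun z => ¬ z < x)) rfl j)).2
      dsimp only
      omega
    · intro i
      have := he _ (hqS (Fin.castLE hr' i)); dsimp only; omega
    · omega
    · exact hst
    · omega
    · rw [image_orderEmbOfFin, image_orderEmbOfFin]
      exact Finset.filter_union_filter_not_eq _ T
    · intro i
      have := hqS (Fin.castLE hr' i)
      rw [Finsupp.mem_support_iff] at this
      dsimp only
      rw [Prod.mk.eta]
      omega


/-! ### The sweep construction -/

def Lt2 (p q : ℕ × ℕ) : Prop := p.1 < q.1 ∧ p.2 < q.2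

instance : IsTrans (ℕ × ℕ) Lt2 :=
  ⟨fun _ _ _ h1 h2 => ⟨lt_trans h1.1 h2.1, lt_trans h1.2 h2.2⟩⟩

def dragSet (S : Finset (ℕ × ℕ)) (y : ℕ → ℕ) (c v : ℕ) : Finset (ℕ × ℕ) :=
  S.filter (fun p => p.2 = c ∧ y v ≤ p.1 ∧ p.1 < y (v + 1))

def stepFn (S : Finset (ℕ × ℕ)) (y : ℕ → ℕ) (c : ℕ) : ℕ → ℕ :=
  fun v => max (y v) ((dragSet S y c v).sup Prod.fst)

def Wfn (n : ℕ) (S : Finset (ℕ × ℕ)) (ebar : ℕ → ℕ) : ℕ → ℕ → ℕ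
  | 0 => ebar
  | (i + 1) => stepFn S (Wfn n S ebar i) (n - i)

def Yf (n : ℕ) (S : Finset (ℕ × ℕ)) (ebar : ℕ → ℕ) (c : ℕ) : ℕ → ℕ :=
  Wfn n S ebar (n - c)

lemma downInd (n : ℕ) (P : ℕ → Prop) (base : P n)
    (step : ∀ c, 1 ≤ c → c ≤ n → P c → P (c - 1)) : ∀ c, c ≤ n → P c := by
  have key : ∀ i, i ≤ n → P (n - i) := by
    intro i
    induction i with
    | zero => intro _; simpa using base
    | succ i ih =>
      intro hi
      have h1 : n - (i + 1) = (n - i) - 1 := by omega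
      rw [h1]
      exact step (n - i) (by omega) (by omega) (ih (by omega))
  intro c hc
  have := key (n - c) (by omega)
  rwa [Nat.sub_sub_self hc] at this

section Sweep

variable {n k : ℕ} {S : Finset (ℕ × ℕ)} {ebar : ℕ → ℕ}

lemma Ytop : Yf n S ebar n = ebar := by
  unfold Yf; rw [Nat.sub_self]; rfl

lemma Ystep (c : ℕ) (hc : 1 ≤ c) (hcn : c ≤ n) :
    Yf n S ebar (c - 1) = stepFn S (Yf n S ebar c) c := by
  unfold Yf
  have h1 : n - (c - 1) = (n - c) + 1 := by omega
  rw [h1]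
  show stepFn S (Wfn n S ebar (n - c)) (n - (n - c)) = _
  have h2 : n - (n - c) = c := by omega
  rw [h2]

variable (hS : ∀ p ∈ S, 1 ≤ p.1 ∧ p.1 ≤ p.2 ∧ p.2 ≤ n)
variable (hmono : StrictMono ebar) (hpos : 1 ≤ ebar 0)
variable (hbig : ∀ v, k ≤ v → n < ebar v)

include hS hmono hpos hbig in
lemma master : ∀ c, c ≤ n →
    (∀ v, 1 ≤ Yf n S ebar c v) ∧ (∀ v, Yf n S ebar c v < Yf n S ebar c (v + 1)) ∧
      (∀ v, k ≤ v → Yf n S ebar c v = ebar v) := by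
  apply downInd n
  · rw [Ytop]
    exact ⟨fun v => le_trans hpos (hmono.monotone (Nat.zero_le v)),
      fun v => hmono (lt_add_one v), fun v _ => rfl⟩
  · intro c hc1 hcn ⟨ih1, ih2, ih3⟩
    rw [Ystep c hc1 hcn]
    unfold stepFn
    refine ⟨fun v => le_trans (ih1 v) (le_max_left _ _), fun v => ?_, fun v hv => ?_⟩
    · apply lt_of_lt_of_le _ (le_max_left _ _)
      apply max_lt (ih2 v)
      rw [Finset.sup_lt_iff (show (⊥ : ℕ) < _ from lt_of_lt_of_le one_pos (ih1 (v + 1)))]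
      intro p hp
      rw [dragSet, Finset.mem_filter] at hp
      exact hp.2.2.2
    · have hempty : dragSet S (Yf n S ebar c) c v = ∅ := by
        rw [dragSet, Finset.filter_eq_empty_iff]
        intro p hp hcond
        obtain ⟨h1, h2, h3⟩ := hcond
        have := hS p hp
        have := ih3 v hv
        have := hbig v hv
        omega
      rw [hempty, Finset.sup_empty]
      have : (⊥ : ℕ) = 0 := rfl
      rw [this, Nat.max_zero]
      exact ih3 v hv

include hS hmono hpos hbig in
lemma Ylt {c : ℕ} (hcn : c ≤ n) {v w : ℕ} (hvw : v < w) :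
    Yf n S ebar c v < Yf n S ebar c w := by
  have := (master hS hmono hpos hbig c hcn).2.1
  exact strictMono_nat_of_lt_succ this hvw

include hS hmono hpos hbig in
lemma Ypos {c : ℕ} (hcn : c ≤ n) (v : ℕ) : 1 ≤ Yf n S ebar c v :=
  (master hS hmono hpos hbig c hcn).1 v

include hS hmono hpos hbig in
lemma Ybig {c : ℕ} (hcn : c ≤ n) {v : ℕ} (hv : k ≤ v) : Yf n S ebar c v = ebar v :=
  (master hS hmono hpos hbig c hcn).2.2 v hv

lemma Ymono_c (c : ℕ) (hc1 : 1 ≤ c) (hcn : c ≤ n) (v : ℕ) :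
    Yf n S ebar c v ≤ Yf n S ebar (c - 1) v := by
  rw [Ystep c hc1 hcn]; exact le_max_left _ _

include hS in
lemma dead_step (c : ℕ) (hc1 : 1 ≤ c) (hcn : c ≤ n) (v : ℕ) (hd : c < Yf n S ebar c v) :
    Yf n S ebar (c - 1) v = Yf n S ebar c v := by
  rw [Ystep c hc1 hcn]
  unfold stepFn
  have hempty : dragSet S (Yf n S ebar c) c v = ∅ := by
    rw [dragSet, Finset.filter_eq_empty_iff]
    intro p hp hcond
    obtain ⟨h1, h2, h3⟩ := hcond
    have := hS p hp
    omega
  rw [hempty, Finset.sup_empty]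
  have : (⊥ : ℕ) = 0 := rfl
  rw [this, Nat.max_zero]

include hS in
lemma alive_step (c : ℕ) (hc1 : 1 ≤ c) (hcn : c ≤ n) (v : ℕ) (ha : Yf n S ebar c v ≤ c) :
    Yf n S ebar (c - 1) v ≤ c := by
  rw [Ystep c hc1 hcn]
  apply max_le ha
  apply Finset.sup_le
  intro p hp
  rw [dragSet, Finset.mem_filter] at hp
  have := hS p hp.1
  omega

include hS hmono hpos hbig in
lemma gap (c : ℕ) (hc1 : 1 ≤ c) (hcn : c ≤ n) (v : ℕ) :
    Yf n S ebar (c - 1) v < Yf n S ebar c (v + 1) := by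
  rw [Ystep c hc1 hcn]
  apply max_lt (Ylt hS hmono hpos hbig hcn (lt_add_one v))
  rw [Finset.sup_lt_iff (show (⊥ : ℕ) < _ from
    lt_of_lt_of_le one_pos (Ypos hS hmono hpos hbig hcn (v + 1)))]
  intro p hp
  rw [dragSet, Finset.mem_filter] at hp
  exact hp.2.2.2

lemma dragCover (c : ℕ) (hc1 : 1 ≤ c) (hcn : c ≤ n) {p : ℕ × ℕ} (hp : p ∈ S)
    (hpc : p.2 = c) {v : ℕ} (h1 : Yf n S ebar c v ≤ p.1) (h2 : p.1 < Yf n S ebar c (v + 1)) :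
    p.1 ≤ Yf n S ebar (c - 1) v := by
  rw [Ystep c hc1 hcn]
  refine le_trans ?_ (le_max_right _ _)
  exact Finset.le_sup (f := Prod.fst) (by rw [dragSet, Finset.mem_filter]; exact ⟨hp, hpc, h1, h2⟩)

include hS in
lemma deadDown (v : ℕ) : ∀ (j c : ℕ), c ≤ n → c < Yf n S ebar c v →
    Yf n S ebar (c - j) v = Yf n S ebar c v := by
  intro j
  induction j with
  | zero => intro c _ _; rfl
  | succ j ih =>
    intro c hc hd
    have h1 := ih c hc hd
    by_cases hcj : c ≤ j
    · have : c - (j + 1) = c - j := by omega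
      rw [this, h1]
    · have hc1 : 1 ≤ c - j := by omega
      have h2 : c - (j + 1) = (c - j) - 1 := by omega
      rw [h2]
      have hdead : (c - j) < Yf n S ebar (c - j) v := by rw [h1]; omega
      rw [dead_step hS (c - j) hc1 (by omega) v hdead, h1]

end Sweep

def sigmaO (n : ℕ) (S : Finset (ℕ × ℕ)) (ebar : ℕ → ℕ) (v : ℕ)
    (h : ∃ c, Yf n S ebar c v ≤ c) : ℕ := Nat.find h

section Sigma

variable {n k : ℕ} {S : Finset (ℕ × ℕ)} {ebar : ℕ → ℕ}
variable (hS : ∀ p ∈ S, 1 ≤ p.1 ∧ p.1 ≤ p.2 ∧ p.2 ≤ n)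
variable (hmono : StrictMono ebar) (hpos : 1 ≤ ebar 0)
variable (hbig : ∀ v, k ≤ v → n < ebar v)
variable {v : ℕ} (hEx : ∃ c, Yf n S ebar c v ≤ c)

include hS hmono hpos hbig in
lemma sigma_pos : 1 ≤ sigmaO n S ebar v hEx := by
  rw [sigmaO]
  by_contra h
  push_neg at h
  have h0 : Nat.find hEx = 0 := by omega
  have hs := Nat.find_spec hEx
  rw [h0] at hs
  have := Ypos (k := k) hS hmono hpos hbig (Nat.zero_le n) v
  omega

lemma sigma_le (hsm : ebar v ≤ n) : sigmaO n S ebar v hEx ≤ n := by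
  rw [sigmaO]
  apply Nat.find_le
  rw [Ytop]
  exact hsm

include hS in
lemma sigma_alive : ∀ c, sigmaO n S ebar v hEx ≤ c → c ≤ n → Yf n S ebar c v ≤ c := by
  intro c hσc hcn
  by_contra h
  push_neg at h
  have hd := deadDown hS v (c - sigmaO n S ebar v hEx) c hcn h
  have heq : c - (c - sigmaO n S ebar v hEx) = sigmaO n S ebar v hEx := by
    have : sigmaO n S ebar v hEx ≤ c := hσc
    omega
  rw [heq] at hd
  have hs := Nat.find_spec hEx
  rw [show Nat.find hEx = sigmaO n S ebar v hEx from rfl] at hs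
  omega

include hS hmono hpos hbig in
lemma sigma_boundary (hσn : sigmaO n S ebar v hEx ≤ n) :
    Yf n S ebar (sigmaO n S ebar v hEx - 1) v = sigmaO n S ebar v hEx := by
  have h1 : 1 ≤ sigmaO n S ebar v hEx := sigma_pos hS hmono hpos hbig hEx
  have h2 : ¬ (Yf n S ebar (sigmaO n S ebar v hEx - 1) v ≤ sigmaO n S ebar v hEx - 1) := by
    apply Nat.find_min hEx
    have hrfl : sigmaO n S ebar v hEx = Nat.find hEx := rfl
    omega
  have hs : Yf n S ebar (sigmaO n S ebar v hEx) v ≤ sigmaO n S ebar v hEx := by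
    rw [show sigmaO n S ebar v hEx = Nat.find hEx from rfl]
    exact Nat.find_spec hEx
  have h3 : Yf n S ebar (sigmaO n S ebar v hEx - 1) v ≤ sigmaO n S ebar v hEx :=
    alive_step hS _ h1 hσn v hs
  omega

include hS hmono hpos hbig in
lemma run_top (c : ℕ) (hσc : sigmaO n S ebar v hEx ≤ c) (hcn : c ≤ n) :
    Yf n S ebar (c - 1) v ≤ c := by
  rcases eq_or_lt_of_le hσc with h | h
  · rw [← h, sigma_boundary hS hmono hpos hbig hEx (le_trans hσc hcn)]
  · have := sigma_alive hS hEx (c - 1) (by omega) (by omega)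
    omega

end Sigma


/-! ### The blame-chain invariant -/

section INV

variable {n k : ℕ} {S : Finset (ℕ × ℕ)} {ebar : ℕ → ℕ}
variable (hS : ∀ p ∈ S, 1 ≤ p.1 ∧ p.1 ≤ p.2 ∧ p.2 ≤ n)
variable (hmono : StrictMono ebar) (hpos : 1 ≤ ebar 0)
variable (hbig : ∀ v, k ≤ v → n < ebar v)

/-- The invariant: the current row of each token is justified by an increasing chain
of support points reaching a token that still sits at its endpoint. -/
def INVp (n : ℕ) (S : Finset (ℕ × ℕ)) (ebar : ℕ → ℕ) (k c v : ℕ) : Prop :=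
  ∃ (u : ℕ) (l : List (ℕ × ℕ)), v ≤ u ∧ u ≤ k ∧ l.length = u - v ∧ l.Chain' Lt2 ∧
    (∀ p ∈ l, p ∈ S) ∧ (∀ p ∈ l, c < p.2) ∧
    (l = [] → Yf n S ebar c v = ebar v) ∧
    (∀ p ∈ l.head?, p.1 = Yf n S ebar c v) ∧
    (∀ p ∈ l.getLast?, p.1 < ebar u)

include hS hmono hpos hbig in
lemma INV_all : ∀ c, c ≤ n → ∀ v, v ≤ k → INVp n S ebar k c v := by
  apply downInd n (fun c => ∀ v, v ≤ k → INVp n S ebar k c v)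
  · intro v hv
    refine ⟨v, [], le_refl v, hv, by simp, List.isChain_nil, by simp, by simp,
      fun _ => by rw [Ytop], by simp, by simp⟩
  · intro c hc1 hcn IH v hv
    by_cases hZ : Yf n S ebar (c - 1) v = Yf n S ebar c v
    · obtain ⟨u, l, h1, h2, h3, h4, h5, h6, h7, h8, h9⟩ := IH v hv
      refine ⟨u, l, h1, h2, h3, h4, h5, fun p hp => by have := h6 p hp; omega,
        fun hl => by rw [hZ]; exact h7 hl, fun p hp => by rw [hZ]; exact h8 p hp, h9⟩
    · -- a drag happened
      have hstep : Yf n S ebar (c - 1) v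
          = max (Yf n S ebar c v) ((dragSet S (Yf n S ebar c) c v).sup Prod.fst) := by
        rw [Ystep c hc1 hcn]; rfl
      have hsupgt : Yf n S ebar c v < (dragSet S (Yf n S ebar c) c v).sup Prod.fst := by
        rcases le_or_gt ((dragSet S (Yf n S ebar c) c v).sup Prod.fst) (Yf n S ebar c v) with h | h
        · exfalso; apply hZ; rw [hstep]; exact max_eq_left h
        · exact h
      have hYeq : Yf n S ebar (c - 1) v = (dragSet S (Yf n S ebar c) c v).sup Prod.fst := by
        rw [hstep]; exact max_eq_right (le_of_lt hsupgt)
      have hne : (dragSet S (Yf n S ebar c) c v).Nonempty := by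
        rw [Finset.nonempty_iff_ne_empty]
        intro hemp
        rw [hemp, Finset.sup_empty] at hsupgt
        have := Ypos (k := k) hS hmono hpos hbig hcn v
        have hb : (⊥ : ℕ) = 0 := rfl
        omega
      obtain ⟨p₀, hp₀mem, hp₀sup⟩ := Finset.exists_mem_eq_sup _ hne Prod.fst
      rw [dragSet, Finset.mem_filter] at hp₀mem
      obtain ⟨hp₀S, hp₀c, hp₀lo, hp₀hi⟩ := hp₀mem
      -- v < k
      have hvk : v < k := by
        rcases eq_or_lt_of_le hv with h | h
        · exfalso
          have hYv := Ybig hS hmono hpos hbig hcn (le_of_eq h.symm)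
          have := hbig v (le_of_eq h.symm)
          have := hS p₀ hp₀S
          omega
        · exact h
      obtain ⟨u', l', hu1, hu2, hlen', hch', hS', hcol', hnil', hhead', hlast'⟩ :=
        IH (v + 1) hvk
      refine ⟨u', p₀ :: l', by omega, hu2, by simp; omega, ?_, ?_, ?_, ?_, ?_, ?_⟩
      · apply List.isChain_cons.mpr
        constructor
        · intro y hy
          have hyl : y ∈ l' := List.mem_of_mem_head? hy
          have h1 := hhead' y hy
          have h2 := hcol' y hyl
          exact ⟨by omega, by omega⟩
        · exact hch'
      · intro p hp
        rcases List.mem_cons.mp hp with h | h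
        · rw [h]; exact hp₀S
        · exact hS' p h
      · intro p hp
        rcases List.mem_cons.mp hp with h | h
        · rw [h]; omega
        · have := hcol' p h; omega
      · intro h; cases h
      · intro p hp
        rw [List.head?_cons, Option.mem_some_iff] at hp
        rw [← hp, hYeq, hp₀sup]
      · match l' with
        | [] =>
          intro p hp
          rw [List.getLast?_singleton, Option.mem_some_iff] at hp
          have hu'eq : u' = v + 1 := by
            have := hlen'; simp at this; omega
          have := hnil' rfl
          rw [← hp, hu'eq, ← this]
          exact hp₀hi
        | q :: l'' =>
          intro p hp
          rw [List.getLast?_cons_cons] at hp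
          exact hlast' p hp

end INV

/-! ### Coverage of the support -/

section Cover

variable {n k : ℕ} {S : Finset (ℕ × ℕ)} {ebar : ℕ → ℕ}
variable (hS : ∀ p ∈ S, 1 ≤ p.1 ∧ p.1 ≤ p.2 ∧ p.2 ≤ n)
variable (hmono : StrictMono ebar) (hpos : 1 ≤ ebar 0)
variable (hbig : ∀ v, k ≤ v → n < ebar v)
variable {E : Finset ℕ}
variable (hth : ∀ (r x : ℕ) (q : Fin r → ℕ × ℕ), StrictMono (fun i => (q i).1) →
      StrictMono (fun i => (q i).2) → (∀ i, q i ∈ S) → (∀ i, (q i).1 < x) →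
      r ≤ (E.filter (· < x)).card)
variable (hcnt : ∀ u, u ≤ k → (E.filter (· < ebar u)).card = u)

lemma chain'_lt2_rows : ∀ (l : List (ℕ × ℕ)), l.Chain' Lt2 → ∀ {B : ℕ},
    (∀ z ∈ l.getLast?, z.1 < B) → ∀ z ∈ l, z.1 < B := by
  intro l
  induction l with
  | nil => intro _ B _ z hz; cases hz
  | cons a t ih =>
    intro hch B hB z hz
    match t with
    | [] =>
      rw [List.mem_singleton] at hz
      rw [hz]
      exact hB _ (by rw [List.getLast?_singleton]; rfl)
    | b :: t' =>
      have hch' := (List.isChain_cons.mp hch)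
      have htail := ih hch'.2 (by rw [List.getLast?_cons_cons] at hB; exact hB)
      rcases List.mem_cons.mp hz with h | h
      · have hab : a.1 < b.1 := (hch'.1 b (by rw [List.head?_cons]; rfl)).1
        have := htail b List.mem_cons_self
        rw [h]; omega
      · exact htail z h

include hS hmono hpos hbig hth hcnt in
lemma topCover : ∀ c, c ≤ n → ∀ p ∈ S, p.2 = c → Yf n S ebar c 0 ≤ p.1 := by
  intro c hcn p hpS hpc
  by_contra hlt
  push_neg at hlt
  obtain ⟨u, l, _, huk, hlen, hch, hmemS, hcol, hnil, hhead, hlast⟩ :=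
    INV_all hS hmono hpos hbig c hcn 0 (Nat.zero_le k)
  set l2 := p :: l with hl2
  have hch2 : l2.Chain' Lt2 := by
    rw [hl2]; apply List.isChain_cons.mpr
    refine ⟨fun y hy => ?_, hch⟩
    have hyl : y ∈ l := List.mem_of_mem_head? hy
    have h1 := hhead y hy
    have h2 := hcol y hyl
    exact ⟨by omega, by omega⟩
  have hlast2 : ∀ z ∈ l2.getLast?, z.1 < ebar u := by
    match l, hl2 with
    | [], h =>
      intro z hz
      rw [h, List.getLast?_singleton, Option.mem_some_iff] at hz
      have hu0 : u = 0 := by simp at hlen; omega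
      have := hnil rfl
      rw [← hz, hu0, ← this]
      exact hlt
    | q :: l'', h =>
      intro z hz
      rw [h, List.getLast?_cons_cons] at hz
      exact hlast z hz
  have hrows : ∀ z ∈ l2, z.1 < ebar u := chain'_lt2_rows l2 hch2 hlast2
  have hmem2 : ∀ z ∈ l2, z ∈ S := by
    intro z hz
    rcases List.mem_cons.mp hz with h | h
    · rw [h]; exact hpS
    · exact hmemS z h
  -- convert to a Fin-indexed chain
  have hlen2 : l2.length = u + 1 := by rw [hl2]; simp; omega
  have hpw : l2.Pairwise Lt2 := List.isChain_iff_pairwise.mp hch2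
  have hget := List.pairwise_iff_get.mp hpw
  have key := hth (u + 1) (ebar u) (fun i => l2.get ⟨i.1, by rw [hlen2]; exact i.2⟩)
    (fun i j hij => (hget _ _ (Fin.mk_lt_mk.mpr (Fin.lt_def.mp hij))).1)
    (fun i j hij => (hget _ _ (Fin.mk_lt_mk.mpr (Fin.lt_def.mp hij))).2)
    (fun i => hmem2 _ (List.get_mem _ _))
    (fun i => hrows _ (List.get_mem _ _))
  rw [hcnt u huk] at key
  omega

end Cover


/-! ### Building lattice paths from the sweep profiles -/

lemma getLast?_range' (s L : ℕ) : (List.range' s (L + 1)).getLast? = some (s + L) := by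
  rw [List.range'_concat, List.getLast?_append]
  simp

lemma head?_range' (s L : ℕ) : (List.range' s (L + 1)).head? = some s := by
  rw [List.range'_succ]; rfl

lemma chain'_range'_rev (s : ℕ) : ∀ L, List.Chain' (fun a b => a = b + 1)
    ((List.range' s L).reverse) := by
  intro L
  induction L with
  | zero => simp; exact List.isChain_nil
  | succ L ih =>
    rw [List.range'_concat, List.reverse_append, List.reverse_singleton,
      List.singleton_append]; apply List.isChain_cons.mpr
    refine ⟨?_, ih⟩
    intro y hy
    rw [List.head?_reverse] at hy
    match L, hy with
    | 0, hy => simp at hy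
    | L' + 1, hy =>
      rw [getLast?_range', Option.mem_some_iff] at hy
      omega

lemma chain'_range'_fwd (R : ℕ → ℕ → Prop) : ∀ (L s : ℕ),
    (∀ c, s ≤ c → c + 1 < s + L → R c (c + 1)) → List.Chain' R (List.range' s L) := by
  intro L
  induction L with
  | zero => intro s _; simp; exact List.isChain_nil
  | succ L ih =>
    intro s h
    rw [List.range'_succ]; apply List.isChain_cons.mpr
    constructor
    · intro y hy
      match L, hy with
      | 0, hy => simp at hy
      | L' + 1, hy =>
        rw [head?_range', Option.mem_some_iff] at hy
        rw [← hy]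
        exact h s (le_refl s) (by omega)
    · apply ih (s + 1)
      intro c hc hcb
      exact h c (by omega) (by omega)

def runO (n : ℕ) (S : Finset (ℕ × ℕ)) (ebar : ℕ → ℕ) (v c : ℕ) : List (ℕ × ℕ) :=
  ((List.range' (Yf n S ebar c v) (Yf n S ebar (c - 1) v + 1 - Yf n S ebar c v)).reverse).map
    (fun i => (i, c))

def pathO (n : ℕ) (S : Finset (ℕ × ℕ)) (ebar : ℕ → ℕ) (v σ : ℕ) : List (ℕ × ℕ) :=
  ((List.range' σ (n + 1 - σ)).map (fun c => runO n S ebar v c)).flatten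

section PathFacts

variable {n k : ℕ} {S : Finset (ℕ × ℕ)} {ebar : ℕ → ℕ} {v σ : ℕ}
variable (hmc : ∀ c, 1 ≤ c → c ≤ n → Yf n S ebar c v ≤ Yf n S ebar (c - 1) v)
variable (hσ1 : 1 ≤ σ) (hσn : σ ≤ n)
variable (hbd : Yf n S ebar (σ - 1) v = σ)
variable (halive : ∀ c, σ ≤ c → c ≤ n → Yf n S ebar c v ≤ c)

include hmc in
lemma run_len {c : ℕ} (h1 : 1 ≤ c) (h2 : c ≤ n) :
    (runO n S ebar v c).length = (Yf n S ebar (c - 1) v - Yf n S ebar c v) + 1 := by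
  have := hmc c h1 h2
  rw [runO, List.length_map, List.length_reverse, List.length_range']
  omega

include hmc in
lemma run_ne {c : ℕ} (h1 : 1 ≤ c) (h2 : c ≤ n) : runO n S ebar v c ≠ [] := by
  intro h
  have := run_len hmc h1 h2 (v := v)
  rw [h] at this
  simp at this

include hmc in
lemma run_head {c : ℕ} (h1 : 1 ≤ c) (h2 : c ≤ n) :
    (runO n S ebar v c).head? = some (Yf n S ebar (c - 1) v, c) := by
  have hm := hmc c h1 h2
  have hlen : Yf n S ebar (c - 1) v + 1 - Yf n S ebar c v
      = (Yf n S ebar (c - 1) v - Yf n S ebar c v) + 1 := by omega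
  rw [runO, hlen, List.head?_map, List.head?_reverse, getLast?_range']
  have : Yf n S ebar c v + (Yf n S ebar (c - 1) v - Yf n S ebar c v)
      = Yf n S ebar (c - 1) v := by omega
  rw [this]
  rfl

include hmc in
lemma run_last {c : ℕ} (h1 : 1 ≤ c) (h2 : c ≤ n) :
    (runO n S ebar v c).getLast? = some (Yf n S ebar c v, c) := by
  have hm := hmc c h1 h2
  have hlen : Yf n S ebar (c - 1) v + 1 - Yf n S ebar c v
      = (Yf n S ebar (c - 1) v - Yf n S ebar c v) + 1 := by omega
  rw [runO, hlen, List.getLast?_map, List.getLast?_reverse, head?_range']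
  rfl

lemma run_chain {c : ℕ} : (runO n S ebar v c).Chain' StepO := by
  rw [runO]; apply (List.isChain_map _).mpr
  apply List.IsChain.imp _ (chain'_range'_rev _ _)
  intro a b h
  exact Or.inl ⟨h, rfl⟩

include hmc in
lemma run_mem {c : ℕ} (h1 : 1 ≤ c) (h2 : c ≤ n) {x : ℕ × ℕ} :
    x ∈ runO n S ebar v c ↔
      x.2 = c ∧ Yf n S ebar c v ≤ x.1 ∧ x.1 ≤ Yf n S ebar (c - 1) v := by
  have hm := hmc c h1 h2
  rw [runO, List.mem_map]
  constructor
  · rintro ⟨i, hi, rfl⟩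
    rw [List.mem_reverse, List.mem_range'] at hi
    obtain ⟨j, hj, rfl⟩ := hi
    refine ⟨rfl, by simp, by simp; omega⟩
  · rintro ⟨hxc, hlo, hhi⟩
    refine ⟨x.1, ?_, by rw [← hxc]⟩
    rw [List.mem_reverse, List.mem_range']
    exact ⟨x.1 - Yf n S ebar c v, by omega, by omega⟩

include hσn in
lemma mem_cols {c : ℕ} : c ∈ List.range' σ (n + 1 - σ) ↔ σ ≤ c ∧ c ≤ n := by
  rw [List.mem_range']
  constructor
  · rintro ⟨j, hj, rfl⟩; omega
  · rintro ⟨h1, h2⟩; exact ⟨c - σ, by omega, by omega⟩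

include hmc hσ1 hσn in
lemma path_not_nil_mem : [] ∉ (List.range' σ (n + 1 - σ)).map (fun c => runO n S ebar v c) := by
  intro h
  rw [List.mem_map] at h
  obtain ⟨c, hc, hcr⟩ := h
  rw [mem_cols hσn] at hc
  exact run_ne hmc (le_trans hσ1 hc.1) hc.2 hcr

include hmc hσ1 hσn in
lemma path_chain : (pathO n S ebar v σ).Chain' StepO := by
  rw [pathO]; apply (List.isChain_flatten (path_not_nil_mem hmc hσ1 hσn)).mpr
  constructor
  · intro l hl
    rw [List.mem_map] at hl
    obtain ⟨c, _, rfl⟩ := hl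
    exact run_chain
  · rw [List.isChain_map]
    apply chain'_range'_fwd
    intro c hc hcb
    have hc1 : 1 ≤ c := le_trans hσ1 hc
    have hcn : c ≤ n := by omega
    have hc2 : c + 1 ≤ n := by omega
    intro x hx y hy
    rw [run_last hmc hc1 hcn, Option.mem_some_iff] at hx
    rw [run_head hmc (by omega) hc2, Option.mem_some_iff] at hy
    right
    rw [← hx, ← hy]
    have : c + 1 - 1 = c := by omega
    rw [this]

include hmc hσ1 hσn hbd in
lemma path_head : (pathO n S ebar v σ).head? = some (σ, σ) := by
  have h1 : n + 1 - σ = (n - σ) + 1 := by omega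
  rw [pathO, h1, List.range'_succ, List.map_cons, List.flatten_cons, List.head?_append,
    run_head hmc hσ1 hσn, hbd]
  rfl

include hmc hσ1 hσn in
lemma path_last : (pathO n S ebar v σ).getLast? = some (Yf n S ebar n v, n) := by
  have h1 : n + 1 - σ = (n - σ) + 1 := by omega
  have h2 : σ + 1 * (n - σ) = n := by omega
  rw [pathO, h1, List.range'_concat, h2, List.map_append, List.flatten_append,
    List.getLast?_append]
  simp only [List.map_cons, List.map_nil, List.flatten_cons, List.flatten_nil,
    List.append_nil]
  rw [run_last hmc (by omega) (le_refl n)]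
  rfl

include hmc hσ1 hσn in
lemma path_ne : pathO n S ebar v σ ≠ [] := by
  intro h
  have := path_last hmc hσ1 hσn (v := v)
  rw [h] at this
  simp at this

include hmc hσ1 hσn in
lemma path_mem {x : ℕ × ℕ} : x ∈ pathO n S ebar v σ ↔
    ∃ c, σ ≤ c ∧ c ≤ n ∧ x.2 = c ∧ Yf n S ebar c v ≤ x.1 ∧ x.1 ≤ Yf n S ebar (c - 1) v := by
  rw [pathO, List.mem_flatten]
  constructor
  · rintro ⟨l, hl, hx⟩
    rw [List.mem_map] at hl
    obtain ⟨c, hc, rfl⟩ := hl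
    rw [mem_cols hσn] at hc
    rw [run_mem hmc (le_trans hσ1 hc.1) hc.2] at hx
    exact ⟨c, hc.1, hc.2, hx⟩
  · rintro ⟨c, h1, h2, h3, h4, h5⟩
    refine ⟨runO n S ebar v c, List.mem_map.mpr ⟨c, (mem_cols hσn).mpr ⟨h1, h2⟩, rfl⟩, ?_⟩
    rw [run_mem hmc (le_trans hσ1 h1) h2]
    exact ⟨h3, h4, h5⟩

end PathFacts


/-! ### Existence of the family -/

theorem family_exists (n k : ℕ) (hk : k ≤ n) (S : Finset (ℕ × ℕ))
    (hS : ∀ p ∈ S, 1 ≤ p.1 ∧ p.1 ≤ p.2 ∧ p.2 ≤ n)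
    (E : Finset ℕ) (hEcard : E.card = k) (hEsub : E ⊆ Finset.Icc 1 n)
    (hth : ∀ (r x : ℕ) (q : Fin r → ℕ × ℕ), StrictMono (fun i => (q i).1) →
      StrictMono (fun i => (q i).2) → (∀ i, q i ∈ S) → (∀ i, (q i).1 < x) →
      r ≤ (E.filter (· < x)).card) :
    ∃ F : OFamily n k, F.endpointSet = E ∧ ∀ p ∈ S, p ∈ F.pointSet := by
  classical
  set f := E.orderEmbOfFin hEcard with hf
  set ebar : ℕ → ℕ := fun v => if h : v < k then f ⟨v, h⟩ else n + 1 + v with hebar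
  have hsmall : ∀ v (h : v < k), 1 ≤ ebar v ∧ ebar v ≤ n := by
    intro v h
    have := hEsub (Finset.orderEmbOfFin_mem E hEcard ⟨v, h⟩)
    rw [Finset.mem_Icc] at this
    rw [hebar]; simp only [h, dif_pos]
    exact this
  have hbig : ∀ v, k ≤ v → n < ebar v := by
    intro v hv
    show n < if h : v < k then f ⟨v, h⟩ else n + 1 + v
    rw [dif_neg (by omega : ¬ v < k)]
    omega
  have hmono : StrictMono ebar := by
    intro v w hvw
    by_cases hw : w < k
    · have hv : v < k := lt_trans hvw hw
      rw [hebar]; simp only [hv, hw, dif_pos]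
      exact f.strictMono (by simpa using hvw)
    · by_cases hv : v < k
      · have h1 := (hsmall v hv).2
        have h2 := hbig w (by omega)
        omega
      · show (if h : v < k then f ⟨v, h⟩ else n + 1 + v)
            < if h : w < k then f ⟨w, h⟩ else n + 1 + w
        rw [dif_neg hv, dif_neg hw]
        omega
  have hpos : 1 ≤ ebar 0 := by
    by_cases h : 0 < k
    · exact (hsmall 0 h).1
    · have := hbig 0 (by omega); omega
  -- counting endpoints below thresholds
  have hcnt : ∀ u, u ≤ k → (E.filter (· < ebar u)).card = u := by
    intro u hu
    rcases eq_or_lt_of_le hu with h | h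
    · subst h
      have : E.filter (· < ebar u) = E := by
        apply Finset.filter_true_of_mem
        intro y hy
        have h1 := hEsub hy
        rw [Finset.mem_Icc] at h1
        have := hbig u (le_refl u)
        omega
      rw [this, hEcard]
    · have hueq : ebar u = f ⟨u, h⟩ := by rw [hebar]; simp only [h, dif_pos]
      have himg : E.filter (· < ebar u)
          = Finset.image (fun w : Fin k => f w) (Finset.univ.filter (fun w : Fin k => w.1 < u)) := by
        ext z
        simp only [Finset.mem_filter, Finset.mem_image, Finset.mem_univ, true_and]
        constructor
        · rintro ⟨hzE, hzlt⟩
          have : z ∈ Set.range f := by rw [hf, Finset.range_orderEmbOfFin]; exact hzE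
          obtain ⟨w, rfl⟩ := this
          refine ⟨w, ?_, rfl⟩
          by_contra hcon
          push_neg at hcon
          have : f ⟨u, h⟩ ≤ f w := f.monotone (Fin.le_def.mpr (by simpa using hcon))
          rw [hueq] at hzlt
          omega
        · rintro ⟨w, hw, rfl⟩
          refine ⟨Finset.orderEmbOfFin_mem E hEcard w, ?_⟩
          rw [hueq]
          exact f.strictMono (Fin.lt_def.mpr (by simpa using hw))
      rw [himg, Finset.card_image_of_injective _ f.injective]
      -- count the Fin k elements with value < u
      have himg2 : Finset.univ.filter (fun w : Fin k => w.1 < u)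
          = Finset.image (Fin.castLE hu) Finset.univ := by
        ext w
        simp only [Finset.mem_filter, Finset.mem_univ, true_and, Finset.mem_image]
        constructor
        · intro hw
          refine ⟨⟨w.1, hw⟩, ?_⟩
          apply Fin.ext
          rfl
        · rintro ⟨y, rfl⟩; exact y.2
      rw [himg2, Finset.card_image_of_injective _ (Fin.castLE_injective hu),
        Finset.card_univ, Fintype.card_fin]
  -- token start columns
  have hEx : ∀ v, v < k → ∃ c, Yf n S ebar c v ≤ c := by
    intro v hv
    exact ⟨n, by rw [Ytop]; exact (hsmall v hv).2⟩
  have hmc : ∀ (v c : ℕ), 1 ≤ c → c ≤ n → Yf n S ebar c v ≤ Yf n S ebar (c - 1) v :=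
    fun v c h1 h2 => Ymono_c c h1 h2 v
  -- abbreviations for the per-token data
  have hσ1 : ∀ (ℓ : Fin k), 1 ≤ sigmaO n S ebar ℓ.1 (hEx ℓ.1 ℓ.2) :=
    fun ℓ => sigma_pos (k := k) hS hmono hpos hbig _
  have hσn : ∀ (ℓ : Fin k), sigmaO n S ebar ℓ.1 (hEx ℓ.1 ℓ.2) ≤ n :=
    fun ℓ => sigma_le _ (hsmall ℓ.1 ℓ.2).2
  have hbd : ∀ (ℓ : Fin k),
      Yf n S ebar (sigmaO n S ebar ℓ.1 (hEx ℓ.1 ℓ.2) - 1) ℓ.1 = sigmaO n S ebar ℓ.1 (hEx ℓ.1 ℓ.2) :=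
    fun ℓ => sigma_boundary (k := k) hS hmono hpos hbig _ (hσn ℓ)
  have hrt : ∀ (ℓ : Fin k) (c : ℕ), sigmaO n S ebar ℓ.1 (hEx ℓ.1 ℓ.2) ≤ c → c ≤ n →
      Yf n S ebar (c - 1) ℓ.1 ≤ c :=
    fun ℓ c h1 h2 => run_top (k := k) hS hmono hpos hbig _ c h1 h2
  refine ⟨⟨fun ℓ => pathO n S ebar ℓ.1 (sigmaO n S ebar ℓ.1 (hEx ℓ.1 ℓ.2)),
    fun ℓ => path_ne (hmc ℓ.1) (hσ1 ℓ) (hσn ℓ),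
    fun ℓ => path_chain (hmc ℓ.1) (hσ1 ℓ) (hσn ℓ),
    fun ℓ => ⟨_, path_head (hmc ℓ.1) (hσ1 ℓ) (hσn ℓ) (hbd ℓ), rfl⟩,
    ?_, ?_, ?_⟩, ?_, ?_⟩
  · -- mem_P
    intro ℓ x hx
    rw [path_mem (hmc ℓ.1) (hσ1 ℓ) (hσn ℓ)] at hx
    obtain ⟨c, h1, h2, h3, h4, h5⟩ := hx
    have hp1 := Ypos (k := k) hS hmono hpos hbig h2 ℓ.1
    have := hrt ℓ c h1 h2
    omega
  · -- ends
    intro ℓ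
    rw [path_last (hmc ℓ.1) (hσ1 ℓ) (hσn ℓ)]
    rfl
  · -- disjointness
    intro ℓ ℓ' hne x hx hx'
    rw [path_mem (hmc ℓ.1) (hσ1 ℓ) (hσn ℓ)] at hx
    rw [path_mem (hmc ℓ'.1) (hσ1 ℓ') (hσn ℓ')] at hx'
    obtain ⟨c, hc1, hc2, hc3, hc4, hc5⟩ := hx
    obtain ⟨c', hd1, hd2, hd3, hd4, hd5⟩ := hx'
    have hcc : c = c' := by omega
    subst hcc
    have hvne : ℓ.1 ≠ ℓ'.1 := fun h => hne (Fin.ext h)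
    have h1c : 1 ≤ c := le_trans (hσ1 ℓ) hc1
    have key : ∀ v w : ℕ, v < w → Yf n S ebar c v ≤ x.1 → x.1 ≤ Yf n S ebar (c - 1) v →
        Yf n S ebar c w ≤ x.1 → False := by
      intro v w hvw hlo hhi hlo'
      have hg := gap (k := k) hS hmono hpos hbig c h1c hc2 v
      have hle : Yf n S ebar c (v + 1) ≤ Yf n S ebar c w := by
        rcases (by omega : v + 1 = w ∨ v + 1 < w) with h | h
        · rw [h]
        · exact le_of_lt (Ylt (k := k) hS hmono hpos hbig hc2 h)
      omega
    rcases lt_or_gt_of_ne hvne with h | h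
    · exact key ℓ.1 ℓ'.1 h hc4 hc5 hd4
    · exact key ℓ'.1 ℓ.1 h hd4 hd5 hc4
  · -- endpointSet = E
    have hlastRow : ∀ (ℓ : Fin k),
        (((pathO n S ebar ℓ.1 (sigmaO n S ebar ℓ.1 (hEx ℓ.1 ℓ.2))).getLast?).map Prod.fst).getD 0
          = f ℓ := by
      intro ℓ
      rw [path_last (hmc ℓ.1) (hσ1 ℓ) (hσn ℓ)]
      show Yf n S ebar n ℓ.1 = f ℓ
      rw [Ytop, hebar]
      simp only [ℓ.2, dif_pos]
    ext z
    simp only [OFamily.endpointSet, OFamily.lastRow, Finset.mem_image, Finset.mem_univ, true_and]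
    constructor
    · rintro ⟨ℓ, rfl⟩
      rw [hlastRow ℓ]
      exact Finset.orderEmbOfFin_mem E hEcard ℓ
    · intro hz
      have : z ∈ Set.range f := by rw [hf, Finset.range_orderEmbOfFin]; exact hz
      obtain ⟨w, rfl⟩ := this
      exact ⟨w, hlastRow w⟩
  · -- coverage
    intro p hpS
    have hp := hS p hpS
    have hc1 : 1 ≤ p.2 := by omega
    have hcn : p.2 ≤ n := by omega
    have htop := topCover (k := k) hS hmono hpos hbig hth hcnt p.2 hcn p hpS rfl
    set P : ℕ → Prop := fun v => Yf n S ebar p.2 v ≤ p.1 with hP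
    have hP0 : P 0 := htop
    set v₀ := Nat.findGreatest P k with hv₀
    have hv₀P : P v₀ := Nat.findGreatest_spec (Nat.zero_le k) hP0
    have hv₀k : v₀ < k := by
      rcases eq_or_lt_of_le (Nat.findGreatest_le (P := P) k) with h | h
      · exfalso
        have hPk : P k := by
          have h2 : P (Nat.findGreatest P k) := hv₀P
          rwa [h] at h2
        rw [hP] at hPk
        have := Ybig (k := k) hS hmono hpos hbig hcn (le_refl k)
        have := hbig k (le_refl k)
        omega
      · rw [hv₀]; exact h
    have hnot : ¬ P (v₀ + 1) :=
      Nat.findGreatest_is_greatest (by rw [← hv₀]; omega) (by omega)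
    have hv₀P' : Yf n S ebar p.2 v₀ ≤ p.1 := hv₀P
    have hnot' : p.1 < Yf n S ebar p.2 (v₀ + 1) := by
      by_contra hcon
      push_neg at hcon
      exact hnot hcon
    have hdrag := dragCover p.2 hc1 hcn hpS rfl hv₀P' hnot'
    have hσc : sigmaO n S ebar v₀ (hEx v₀ hv₀k) ≤ p.2 := by
      rw [sigmaO]
      apply Nat.find_le
      omega
    simp only [OFamily.pointSet, Finset.mem_biUnion, Finset.mem_univ, true_and,
      List.mem_toFinset]
    refine ⟨⟨v₀, hv₀k⟩, ?_⟩
    rw [path_mem (hmc v₀) (hσ1 ⟨v₀, hv₀k⟩) (hσn ⟨v₀, hv₀k⟩)]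
    exact ⟨p.2, hσc, hcn, rfl, hv₀P', hdrag⟩


/-- **Lemma 7.14.**  `e` is `T`-standard if and only if `supp(e) ⊆ 𝐅` for some family
`𝐅` with `𝐅 ⇉ T`. -/
theorem o_standard_monomial_support (n k m : ℕ) (hm : m ≤ k) (hkn : k ≤ n)
    (T : Finset ℕ) (hT : T ⊆ Finset.Icc 1 n) (hTcard : T.card = m)
    (e : (ℕ × ℕ) →₀ ℕ) (he : ∀ x ∈ e.support, 1 ≤ x.1 ∧ x.1 ≤ x.2 ∧ x.2 ≤ n) :
    ¬ TNonstandardO n k m T e ↔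
      ∃ F : OFamily n k, EtoTO n k F.endpointSet T ∧ ∀ x ∈ e.support, x ∈ F.pointSet := by
  constructor
  · intro hstd
    obtain ⟨F, hFE, hFcov⟩ := family_exists n k hkn e.support he (Efin n k m T)
      (Efin_card hm hkn hT hTcard) (Efin_subset hT)
      (thresh_of_not_nonstandard n k m hm hkn T hT hTcard e he hstd)
    refine ⟨F, ?_, hFcov⟩
    rw [hFE]
    exact Efin_EtoTO hm hkn hT hTcard
  · rintro ⟨F, hFE, hcov⟩
    exact no_split_of_family n k m T e F hFE hcov

end
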